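/- Let A be an n×n {0,1}-matrix and c ∈ {0,1}^n. Define the (n+2)×(n+2) matrix A_{C_n} with upper-left block A, (i,n+1) entry c_i and (i,n+2) entry 0 for i ≤ n, row n+1 all ones, and row n+2 equal to (0,...,0,1,0). Define the (n+2)×(n+2) matrix Â_{C_n} with upper-left block A^t, (i,n+1) entry 1 and (i,n+2) entry 0 for i ≤ n, row n+1 all ones, and row n+2 equal to (c_1,...,c_n,1,1). Then there is a group isomorphism (Coker(I_{n+2} − A_{C_n}), class of (−c_1,...,−c_n,0,0)) ≅ (Coker(I_{n+2} − (Â_{C_n})^t), class of (1,1,...,1)), i.e. an isomorphism of the cokernels taking the first distinguished class to the second; moreover Ker(I_{n+2} − A_{C_n}) ≅ Ker(I_{n+2} − (Â_{C_n})^t). -/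

import Mathlib

open Matrix
def ACn (n : ℕ) (A : Matrix (Fin n) (Fin n) ℤ) (c : Fin n → ℤ) :
    Matrix (Fin (n + 2)) (Fin (n + 2)) ℤ :=
  Matrix.of fun i j =>
    if hi : (i : ℕ) < n then
      (if hj : (j : ℕ) < n then A ⟨i, hi⟩ ⟨j, hj⟩
       else if (j : ℕ) = n then c ⟨i, hi⟩ else 0)
    else if (i : ℕ) = n then 1
    else (if (j : ℕ) = n then 1 else 0)

/-- The vector `(−c_1,…,−c_n,0,0) ∈ ℤ^{n+2}`. -/
def negCvec (n : ℕ) (c : Fin n → ℤ) : Fin (n + 2) → ℤ :=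
  fun k => if h : (k : ℕ) < n then -c ⟨k, h⟩ else 0

/-- The (n+2)×(n+2) matrix `Â_{C_n}`: upper-left n×n block `A^t`, then for
`i ≤ n` the (i,n+1) entry is `1` and the (i,n+2) entry is `0`; the (n+1)st
row is all 1's and the (n+2)nd row is `(c_1,…,c_n,1,1)`. -/
def AhatCn (n : ℕ) (A : Matrix (Fin n) (Fin n) ℤ) (c : Fin n → ℤ) :
    Matrix (Fin (n + 2)) (Fin (n + 2)) ℤ :=
  Matrix.of fun i j =>
    if hi : (i : ℕ) < n then
      (if hj : (j : ℕ) < n then A ⟨j, hj⟩ ⟨i, hi⟩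
       else if (j : ℕ) = n then 1 else 0)
    else if (i : ℕ) = n then 1
    else (if hj : (j : ℕ) < n then c ⟨j, hj⟩ else 1)

namespace Stmt10Aux

variable (n : ℕ) (A : Matrix (Fin n) (Fin n) ℤ) (c : Fin n → ℤ)

/-- index n -/
def u : Fin (n + 2) := ⟨n, by omega⟩
/-- index n+1 -/
def v : Fin (n + 2) := ⟨n + 1, by omega⟩

def p : Fin (n + 2) → ℤ := fun i => if h : (i : ℕ) < n then 1 - c ⟨i, h⟩ else 0

lemma p_v : p n c (v n) = 0 := by simp [p, v]

/-- adds `p i` times row `v` to row `i` (as `1 + Ep`). -/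
def Ep : Matrix (Fin (n + 2)) (Fin (n + 2)) ℤ :=
  Matrix.of fun i j => if j = v n then p n c i else 0

lemma Ep_mul (X : Matrix (Fin (n + 2)) (Fin (n + 2)) ℤ) :
    Ep n c * X = Matrix.of fun i j => p n c i * X (v n) j := by
  ext i j
  simp [Ep, Matrix.mul_apply, ite_mul]

lemma Ep_mulVec (x : Fin (n + 2) → ℤ) :
    (Ep n c).mulVec x = fun i => p n c i * x (v n) := by
  funext i
  simp [Ep, Matrix.mulVec, dotProduct, ite_mul]

lemma Ep_Ep : Ep n c * Ep n c = 0 := by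
  rw [Ep_mul]
  ext i j
  simp [Ep, p_v, mul_ite]

def Eq' : Matrix (Fin (n + 2)) (Fin (n + 2)) ℤ :=
  Matrix.single (u n) (v n) 1

lemma v_ne_u : v n ≠ u n := by simp [u, v, Fin.ext_iff]

lemma Eq_Eq : Eq' n * Eq' n = 0 := by
  simpa [Eq'] using Matrix.single_mul_single_of_ne (c := (1:ℤ)) (i := u n) (j := v n) (k := u n) (h := v_ne_u n) (d := (1:ℤ))

def P : Matrix (Fin (n + 2)) (Fin (n + 2)) ℤ := 1 + Ep n c
def Q : Matrix (Fin (n + 2)) (Fin (n + 2)) ℤ := 1 + Eq' n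

lemma P_inv : P n c * (1 - Ep n c) = 1 := by
  have h := Ep_Ep n c
  unfold P
  noncomm_ring
  rw [h]; simp

lemma P_inv' : (1 - Ep n c) * P n c = 1 := by
  have h := Ep_Ep n c
  unfold P
  noncomm_ring
  rw [h]; simp

lemma Q_inv : Q n * (1 - Eq' n) = 1 := by
  have h := Eq_Eq n
  unfold Q
  noncomm_ring
  rw [h]; simp

lemma Q_inv' : (1 - Eq' n) * Q n = 1 := by
  have h := Eq_Eq n
  unfold Q
  noncomm_ring
  rw [h]; simp

/-- the key identity `P (1 - A_{C_n}) Q = 1 - (Â_{C_n})ᵀ`. -/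
lemma key : P n c * (1 - ACn n A c) * Q n = 1 - (AhatCn n A c)ᵀ := by
  set M := 1 - ACn n A c with hM
  have h1 : P n c * M = M + Matrix.of fun i j => p n c i * M (v n) j := by
    unfold P; rw [add_mul, one_mul, Ep_mul]
  rw [h1]
  unfold Q Eq'
  rw [mul_add, mul_one]
  ext i j
  by_cases hj : j = v n
  · subst hj
    rw [Matrix.add_apply, Matrix.mul_single_apply_same]
    simp only [Matrix.add_apply, Matrix.of_apply, Matrix.sub_apply, Matrix.one_apply,
      Matrix.transpose_apply, hM, ACn, AhatCn, u, v, p, Matrix.of_apply]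
    by_cases hi : (i : ℕ) < n
    · simp [hi, Fin.ext_iff, Nat.ne_of_lt hi, (by omega : ¬ (i:ℕ) = n + 1),
        (by omega : ¬ (n:ℕ) < n), (by omega : ¬ (n+1:ℕ) < n), (by omega : ¬ (i:ℕ) = n)]
      ring
    · have hi2 : (i : ℕ) = n ∨ (i : ℕ) = n + 1 := by omega
      rcases hi2 with hi2 | hi2 <;>
        simp [hi, hi2, Fin.ext_iff, (by omega : ¬ (n:ℕ) < n), (by omega : ¬ (n+1:ℕ) < n)] <;>
        ring
  · rw [Matrix.add_apply, Matrix.mul_single_apply_of_ne (hbj := hj), add_zero]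
    have hjv : (j : ℕ) ≠ n + 1 := fun h => hj (Fin.ext h)
    simp only [Matrix.add_apply, Matrix.of_apply, Matrix.sub_apply, Matrix.one_apply,
      Matrix.transpose_apply, hM, ACn, AhatCn, u, v, p]
    by_cases hi : (i : ℕ) < n <;> by_cases hjn : (j : ℕ) < n
    · simp [hi, hjn, Fin.ext_iff, (by omega : ¬ (n+1:ℕ) < n), Nat.ne_of_lt hjn]
      intro h
      exact absurd h (by omega)
    · have hj2 : (j : ℕ) = n := by omega
      simp [hi, hjn, hj2, Fin.ext_iff, (by omega : ¬ (n+1:ℕ) < n), Nat.ne_of_lt hi]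
      ring
    · have hi2 : (i : ℕ) = n ∨ (i : ℕ) = n + 1 := by omega
      rcases hi2 with hi2 | hi2 <;>
        simp [hi, hi2, hjn, Fin.ext_iff, Nat.ne_of_lt hjn,
          (by omega : ¬ (n+1:ℕ) < n)] <;> ring
    · have hj2 : (j : ℕ) = n := by omega
      have hi2 : (i : ℕ) = n ∨ (i : ℕ) = n + 1 := by omega
      rcases hi2 with hi2 | hi2 <;>
        simp [hi, hi2, hjn, hj2, Fin.ext_iff, (by omega : ¬ (n+1:ℕ) < n)] <;> ring

def w : Fin (n + 2) → ℤ := fun i => if (i : ℕ) < n then 0 else 1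

lemma hw : (1 - (AhatCn n A c)ᵀ).mulVec (w n) = fun i => negCvec n c i - 1 := by
  funext i
  show ∑ j, (1 - (AhatCn n A c)ᵀ) i j * w n j = _
  rw [Fin.sum_univ_castSucc, Fin.sum_univ_castSucc]
  have hz : ∑ j : Fin n, (1 - (AhatCn n A c)ᵀ) i j.castSucc.castSucc *
      w n j.castSucc.castSucc = 0 := by
    apply Finset.sum_eq_zero
    intro j _
    have : w n j.castSucc.castSucc = 0 := by simp [w, j.isLt]
    rw [this, mul_zero]
  rw [hz, zero_add]
  have hwu : w n (Fin.last n).castSucc = 1 := by simp [w]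
  have hwv : w n (Fin.last (n + 1)) = 1 := by simp [w]
  rw [hwu, hwv, mul_one, mul_one]
  simp only [Matrix.sub_apply, Matrix.one_apply, Matrix.transpose_apply, AhatCn,
    Matrix.of_apply, negCvec]
  by_cases hi : (i : ℕ) < n
  · simp [hi, Fin.ext_iff, Nat.ne_of_lt hi, (by omega : ¬ (n:ℕ) < n),
      (by omega : ¬ (n+1:ℕ) < n), (by omega : (i:ℕ) ≠ n+1)]
    rw [if_neg (show ¬ ((i:ℕ) = n + 1) by omega)]
    ring
  · have hi2 : (i : ℕ) = n ∨ (i : ℕ) = n + 1 := by omega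
    rcases hi2 with hi2 | hi2 <;>
      simp [hi, hi2, Fin.ext_iff, (by omega : ¬ (n:ℕ) < n),
        (by omega : ¬ (n+1:ℕ) < n), (by omega : ¬ (n:ℕ) = 1+n)] <;> ring

lemma P_fix : (P n c).mulVec (negCvec n c) = negCvec n c := by
  unfold P
  rw [Matrix.add_mulVec, Matrix.one_mulVec, Ep_mulVec]
  have : negCvec n c (v n) = 0 := by simp [negCvec, v]
  funext i
  simp [this]

end Stmt10Aux

open Stmt10Aux in
theorem stmt10 (n : ℕ) (A : Matrix (Fin n) (Fin n) ℤ) (c : Fin n → ℤ)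
    (hA : ∀ i j, A i j = 0 ∨ A i j = 1) (hc : ∀ i, c i = 0 ∨ c i = 1) :
    (∃ e : ((Fin (n + 2) → ℤ) ⧸ LinearMap.range (1 - ACn n A c).mulVecLin) ≃ₗ[ℤ]
        ((Fin (n + 2) → ℤ) ⧸ LinearMap.range (1 - (AhatCn n A c)ᵀ).mulVecLin),
      e (Submodule.Quotient.mk (negCvec n c)) =
        Submodule.Quotient.mk (fun _ => 1)) ∧
    Nonempty (LinearMap.ker (1 - ACn n A c).mulVecLin ≃ₗ[ℤ]
      LinearMap.ker (1 - (AhatCn n A c)ᵀ).mulVecLin) := by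
  classical
  set M := 1 - ACn n A c with hMdef
  set Mh := 1 - (AhatCn n A c)ᵀ with hMhdef
  -- linear equivs from P and Q
  let Pe : (Fin (n + 2) → ℤ) ≃ₗ[ℤ] (Fin (n + 2) → ℤ) :=
    LinearEquiv.ofLinear (P n c).mulVecLin (1 - Ep n c).mulVecLin
      (by rw [← Matrix.mulVecLin_mul, P_inv, Matrix.mulVecLin_one])
      (by rw [← Matrix.mulVecLin_mul, P_inv', Matrix.mulVecLin_one])
  let Qe : (Fin (n + 2) → ℤ) ≃ₗ[ℤ] (Fin (n + 2) → ℤ) :=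
    LinearEquiv.ofLinear (Q n).mulVecLin (1 - Eq' n).mulVecLin
      (by rw [← Matrix.mulVecLin_mul, Q_inv, Matrix.mulVecLin_one])
      (by rw [← Matrix.mulVecLin_mul, Q_inv', Matrix.mulVecLin_one])
  have hfactor : Mh.mulVecLin =
      ((P n c).mulVecLin ∘ₗ M.mulVecLin) ∘ₗ (Q n).mulVecLin := by
    rw [hMhdef, hMdef, ← key n A c, Matrix.mulVecLin_mul, Matrix.mulVecLin_mul]
  have hQtop : LinearMap.range (Q n).mulVecLin = ⊤ :=
    LinearMap.range_eq_top.mpr Qe.surjective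
  have hPker : LinearMap.ker (P n c).mulVecLin = ⊥ :=
    LinearMap.ker_eq_bot.mpr Pe.injective
  have hrange : Submodule.map (Pe : (Fin (n+2) → ℤ) →ₗ[ℤ] (Fin (n+2) → ℤ))
      (LinearMap.range M.mulVecLin) = LinearMap.range Mh.mulVecLin := by
    rw [hfactor, LinearMap.range_comp_of_range_eq_top _ hQtop, LinearMap.range_comp]
    rfl
  constructor
  · refine ⟨Submodule.Quotient.equiv _ _ Pe hrange, ?_⟩
    have happ : (Submodule.Quotient.equiv (LinearMap.range M.mulVecLin)
        (LinearMap.range Mh.mulVecLin) Pe hrange)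
        (Submodule.Quotient.mk (negCvec n c)) =
        Submodule.Quotient.mk (Pe (negCvec n c)) := by
      simp [Submodule.Quotient.equiv, Submodule.mapQ_apply]
    rw [happ]
    have hPeval : Pe (negCvec n c) = negCvec n c := P_fix n c
    rw [hPeval]
    rw [Submodule.Quotient.eq]
    exact ⟨w n, by rw [Matrix.mulVecLin_apply, hw n A c]; funext i; simp [negCvec]⟩
  · have hker : Submodule.map (Qe.symm : (Fin (n+2) → ℤ) →ₗ[ℤ] (Fin (n+2) → ℤ))
        (LinearMap.ker M.mulVecLin) = LinearMap.ker Mh.mulVecLin := by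
      rw [hfactor, LinearMap.ker_comp, LinearMap.ker_comp_of_ker_eq_bot _ hPker]
      exact (Submodule.comap_equiv_eq_map_symm Qe _).symm
    exact ⟨(Qe.symm.submoduleMap (LinearMap.ker M.mulVecLin)).trans
      (LinearEquiv.ofEq _ _ hker)⟩
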